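/- Let A be a real n×m matrix with full column rank m, H a symmetric n×n matrix, and ρ ∈ ℝ. Define P = A(AᵀA)⁻¹Aᵀ, P̄ = I − P, and A† = (AᵀA)⁻¹Aᵀ. Assume P̄ H P̄ is positive semidefinite. Then the matrix P̄ H P̄ − P H P + ρ A Aᵀ is positive semidefinite if and only if ρ ≥ λ_max(A† H (A†)ᵀ), where λ_max denotes the largest eigenvalue of the symmetric m×m matrix A† H (A†)ᵀ. -/

import Mathlib

open Matrix

/-- algebraic content of Theorem 3.3, (16-2). With `P = A(AᵀA)⁻¹Aᵀ`,
`P̄ = I − P`, `A† = (AᵀA)⁻¹Aᵀ`, `A` of full column rank, `H` symmetric and `P̄ H P̄ ⪰ 0`: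
`P̄ H P̄ − P H P + ρ A Aᵀ ⪰ 0` if and only if `ρ ≥ λ_max(A† H (A†)ᵀ)` (the largest
eigenvalue, formalized via `IsGreatest` of the eigenvalue set). -/
theorem quadratic_penalty_psd_threshold
    {n m : ℕ} (A : Matrix (Fin n) (Fin m) ℝ) (hA : A.rank = m)
    (H : Matrix (Fin n) (Fin n) ℝ) (hHsymm : H.IsSymm) (ρ : ℝ)
    (P Pbar : Matrix (Fin n) (Fin n) ℝ) (Adag : Matrix (Fin m) (Fin n) ℝ)
    (hP : P = A * (Aᵀ * A)⁻¹ * Aᵀ) (hPbar : Pbar = 1 - P)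
    (hAdag : Adag = (Aᵀ * A)⁻¹ * Aᵀ)
    (hPSD : (Pbar * H * Pbar).PosSemidef)
    (μ : ℝ)
    (hμ : IsGreatest {r : ℝ | ∃ v : Fin m → ℝ, v ≠ 0 ∧ (Adag * H * Adagᵀ).mulVec v = r • v} μ) :
    (Pbar * H * Pbar - P * H * P + ρ • (A * Aᵀ)).PosSemidef ↔ μ ≤ ρ := by
  classical
  set G := Aᵀ * A with hG
  -- G is invertible
  have hGU : IsUnit G := by
    have hrank : G.rank = m := by rw [hG, Matrix.rank_transpose_mul_self, hA]
    have hsurj : Function.Surjective G.mulVecLin := by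
      rw [← LinearMap.range_eq_top]
      apply Submodule.eq_top_of_finrank_eq
      rw [show Module.finrank ℝ (LinearMap.range G.mulVecLin) = G.rank from rfl, hrank]
      simp [Module.finrank_fintype_fun_eq_card]
    exact Matrix.mulVec_injective_iff_isUnit.mp
      ((LinearMap.injective_iff_surjective).mpr hsurj)
  have hGdet : IsUnit G.det := (Matrix.isUnit_iff_isUnit_det G).mp hGU
  have hGmul : G * G⁻¹ = 1 := Matrix.mul_nonsing_inv G hGdet
  have hmulG : G⁻¹ * G = 1 := Matrix.nonsing_inv_mul G hGdet
  have hGsymm : Gᵀ = G := by rw [hG, Matrix.transpose_mul, Matrix.transpose_transpose]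
  have hGinvsymm : (G⁻¹)ᵀ = G⁻¹ := by
    rw [Matrix.transpose_nonsing_inv, hGsymm]
  have hAdagT : Adagᵀ = A * G⁻¹ := by
    rw [hAdag, Matrix.transpose_mul, Matrix.transpose_transpose, hGinvsymm]
  set M := Adag * H * Adagᵀ with hM
  -- key matrix identity
  have hPHP : P * H * P = A * M * Aᵀ := by
    rw [hP, hM, hAdagT, hAdag]
    simp only [Matrix.mul_assoc]
  have hSid : Pbar * H * Pbar - P * H * P + ρ • (A * Aᵀ)
      = Pbar * H * Pbar + A * (ρ • (1 : Matrix (Fin m) (Fin m) ℝ) - M) * Aᵀ := by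
    rw [Matrix.mul_sub, Matrix.sub_mul, hPHP]
    rw [Matrix.mul_smul, Matrix.smul_mul, Matrix.mul_one]
    abel
  have hMsymm : Mᵀ = M := by
    rw [hM]
    rw [Matrix.transpose_mul, Matrix.transpose_mul, Matrix.transpose_transpose,
      hHsymm.eq, Matrix.mul_assoc]
  constructor
  · -- PSD → μ ≤ ρ
    intro hS
    obtain ⟨v, hv0, hvM⟩ := hμ.1
    set x := A *ᵥ (G⁻¹ *ᵥ v) with hx
    have hAtx : Aᵀ *ᵥ x = v := by
      rw [hx, Matrix.mulVec_mulVec, Matrix.mulVec_mulVec, ← hG, hGmul, Matrix.one_mulVec]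
    have hPbarA : Pbar * A = 0 := by
      have hPA : P * A = A := by
        rw [hP, Matrix.mul_assoc (A * G⁻¹) Aᵀ A, ← hG, Matrix.mul_assoc A G⁻¹ G, hmulG,
          Matrix.mul_one]
      rw [hPbar, Matrix.sub_mul, Matrix.one_mul, hPA, sub_self]
    have hPbarx : Pbar *ᵥ x = 0 := by
      rw [hx, Matrix.mulVec_mulVec, hPbarA, Matrix.zero_mulVec]
    have hq := hS.dotProduct_mulVec_nonneg x
    rw [hSid] at hq
    rw [Matrix.add_mulVec, dotProduct_add] at hq
    have h1 : (Pbar * H * Pbar) *ᵥ x = 0 := by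
      rw [← Matrix.mulVec_mulVec, hPbarx, Matrix.mulVec_zero]
    have hNv : (ρ • (1 : Matrix (Fin m) (Fin m) ℝ) - M) *ᵥ v = (ρ - μ) • v := by
      rw [Matrix.sub_mulVec, Matrix.smul_mulVec, Matrix.one_mulVec, hvM, sub_smul]
    have e1 : (A * (ρ • (1 : Matrix (Fin m) (Fin m) ℝ) - M) * Aᵀ) *ᵥ x
        = A *ᵥ ((ρ • (1 : Matrix (Fin m) (Fin m) ℝ) - M) *ᵥ (Aᵀ *ᵥ x)) := by
      simp only [Matrix.mulVec_mulVec, Matrix.mul_assoc]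
    have h2 : star x ⬝ᵥ (A * (ρ • (1 : Matrix (Fin m) (Fin m) ℝ) - M) * Aᵀ) *ᵥ x
        = (ρ - μ) * (v ⬝ᵥ v) := by
      rw [star_trivial, e1, hAtx, hNv, Matrix.dotProduct_mulVec,
        ← Matrix.mulVec_transpose, hAtx]
      simp [dotProduct_smul, smul_eq_mul]
    rw [h1, dotProduct_zero, zero_add, h2] at hq
    have hvv : 0 < v ⬝ᵥ v := by
      have hnn : 0 ≤ v ⬝ᵥ v := Finset.sum_nonneg fun i _ => mul_self_nonneg (v i)
      rcases lt_or_eq_of_le hnn with h | h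
      · exact h
      · exact absurd ((dotProduct_self_eq_zero).mp h.symm) hv0
    nlinarith
  · -- μ ≤ ρ → PSD
    intro hρ
    have hNH : (ρ • (1 : Matrix (Fin m) (Fin m) ℝ) - M).IsHermitian := by
      rw [Matrix.IsHermitian, Matrix.conjTranspose_eq_transpose_of_trivial,
        Matrix.transpose_sub, Matrix.transpose_smul, Matrix.transpose_one, hMsymm]
    have hNpsd : (ρ • (1 : Matrix (Fin m) (Fin m) ℝ) - M).PosSemidef := by
      apply hNH.posSemidef_iff_eigenvalues_nonneg.mpr
      intro i
      set w : Fin m → ℝ := ⇑(hNH.eigenvectorBasis i) with hw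
      have hweig : (ρ • (1 : Matrix (Fin m) (Fin m) ℝ) - M) *ᵥ w
          = hNH.eigenvalues i • w := hNH.mulVec_eigenvectorBasis i
      have hwne : w ≠ 0 := by
        intro h
        exact hNH.eigenvectorBasis.orthonormal.ne_zero i (by ext j; exact congrFun h j)
      have h1 : (ρ • (1 : Matrix (Fin m) (Fin m) ℝ) - M) *ᵥ w = ρ • w - M *ᵥ w := by
        rw [Matrix.sub_mulVec, Matrix.smul_mulVec, Matrix.one_mulVec]
      have hMw : M *ᵥ w = (ρ - hNH.eigenvalues i) • w := by
        rw [sub_smul, ← hweig, h1]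
        abel
      have : ρ - hNH.eigenvalues i ≤ μ := hμ.2 ⟨w, hwne, hMw⟩
      exact (by linarith : (0 : ℝ) ≤ hNH.eigenvalues i)
    rw [hSid]
    refine hPSD.add ?_
    have := hNpsd.mul_mul_conjTranspose_same A
    rwa [Matrix.conjTranspose_eq_transpose_of_trivial] at this
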